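/- The mutation operator M is strongly transitive on (X_N, d): for all X, Y ∈ X_N and every neighborhood V of X, there exist n ∈ ℕ and X' ∈ V such that M^n(X') = Y. -/

import Mathlib

/-- The discrete metric on ℝ: `ddelta x y = 1` if `x ≠ y`, and `0` otherwise. -/
noncomputable def ddelta (x y : ℝ) : ℝ := if x = y then 0 else 1

/-- `Fdel (x₁, x₂) = |x₁| + δ(0, x₂)`. -/
noncomputable def Fdel (x : ℝ × ℝ) : ℝ := |x.1| + ddelta 0 x.2

/-- A single mutation: a position in `{1,…,N}` together with a nucleotide in `{1,2,3,4}`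
(encoded with `Fin N` and `Fin 4`). -/
abbrev Mut (N : ℕ) := Fin N × Fin 4

/-- A mutations sequence: an infinite sequence of mutations. -/
abbrev MutSeq (N : ℕ) := ℕ → Mut N

/-- A genome of size `N`: a sequence of `N` nucleotides in `{1,2,3,4}` (encoded by `Fin 4`,
where `0,1,2,3` stand for the labels `1,2,3,4`, i.e. `A,C,G,T`). -/
abbrev Genome (N : ℕ) := Fin N → Fin 4

/-- The phase space `X_N = {1,2,3,4}^N × S_N`. -/
abbrev Phase (N : ℕ) := Genome N × MutSeq N

/-- A mutation regarded as a pair of real numbers, using the labels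
`1,…,N` for positions and `1,2,3,4` for nucleotides. -/
noncomputable def mutR {N : ℕ} (m : Mut N) : ℝ × ℝ :=
  ((m.1.1 : ℝ) + 1, (m.2.1 : ℝ) + 1)

/-- `d_G(G, Ǧ) = Σ_{k=1}^{N} δ(G_k, Ǧ_k)`, with `δ` the discrete metric. -/
noncomputable def dG {N : ℕ} (G G' : Genome N) : ℝ :=
  ∑ k : Fin N, if G k = G' k then (0 : ℝ) else 1

/-- `d_S(S, Š) = (9/N) Σ_{k=0}^{∞} F(S^k − Š^k)/10^(k+1)`. -/
noncomputable def dS {N : ℕ} (S S' : MutSeq N) : ℝ :=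
  (9 / N) * ∑' k : ℕ, Fdel (mutR (S k) - mutR (S' k)) / 10 ^ (k + 1)

/-- The distance `d((G,S), (Ǧ,Š)) = d_G(G,Ǧ) + d_S(S,Š)` on the phase space. -/
noncomputable def dX {N : ℕ} (X Y : Phase N) : ℝ := dG X.1 Y.1 + dS X.2 Y.2

/-- The mutation operator `M(G, S) = (G', σ(S))`: the nucleotide of `G` at position `(S⁰)₁`
is replaced by the nucleotide `(S⁰)₂`, and the mutations sequence is shifted. -/
noncomputable def Mop {N : ℕ} (X : Phase N) : Phase N :=
  (Function.update X.1 (X.2 0).1 (X.2 0).2, fun k => X.2 (k + 1))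

/-- A set `U ⊆ X_N` is open for the metric `d` if around any of its points it
contains an open ball of positive radius. -/
def IsOpenD {N : ℕ} (U : Set (Phase N)) : Prop :=
  ∀ x ∈ U, ∃ ε > 0, ∀ y, dX x y < ε → y ∈ U



/-- Apply the first `n` mutations of `S` to `G`. -/
def applyMuts {N : ℕ} : ℕ → Genome N → MutSeq N → Genome N
  | 0, G, _ => G
  | n + 1, G, S => applyMuts n (Function.update G (S 0).1 (S 0).2) (fun k => S (k + 1))

lemma Mop_iterate {N : ℕ} : ∀ (r : ℕ) (G : Genome N) (S : MutSeq N),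
    (Mop (N := N))^[r] (G, S) = (applyMuts r G S, fun k => S (k + r)) := by
  intro r
  induction r with
  | zero => intro G S; simp [applyMuts]
  | succ r ih =>
    intro G S
    rw [Function.iterate_succ_apply]
    show (Mop (N := N))^[r] (Function.update G (S 0).1 (S 0).2, fun k => S (k + 1)) = _
    rw [ih]; rfl

lemma applyMuts_add {N : ℕ} : ∀ (a b : ℕ) (G : Genome N) (S : MutSeq N),
    applyMuts (a + b) G S = applyMuts b (applyMuts a G S) (fun k => S (k + a)) := by
  intro a
  induction a with
  | zero => intro b G S; simp [applyMuts]
  | succ a ih =>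
    intro b G S
    rw [Nat.succ_add]
    show applyMuts (a + b) (Function.update G (S 0).1 (S 0).2) (fun k => S (k + 1)) = _
    rw [ih]; rfl

lemma applyMuts_untouched {N : ℕ} : ∀ (r : ℕ) (G : Genome N) (T : MutSeq N) (p : Fin N),
    (∀ i < r, (T i).1 ≠ p) → applyMuts r G T p = G p := by
  intro r
  induction r with
  | zero => intro G T p _; rfl
  | succ r ih =>
    intro G T p h
    show applyMuts r (Function.update G (T 0).1 (T 0).2) (fun k => T (k + 1)) p = G p
    rw [ih _ _ _ (fun i hi => h (i + 1) (by omega))]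
    exact Function.update_of_ne (Ne.symm (h 0 (by omega))) _ _

lemma applyMuts_hit {N : ℕ} : ∀ (r : ℕ) (G : Genome N) (T : MutSeq N) (p : Fin N) (i : ℕ),
    i < r → (T i).1 = p → (∀ j < r, (T j).1 = p → (T j).2 = (T i).2) →
    applyMuts r G T p = (T i).2 := by
  intro r
  induction r with
  | zero => omega
  | succ r ih =>
    intro G T p i hi hip huniq
    show applyMuts r (Function.update G (T 0).1 (T 0).2) (fun k => T (k + 1)) p = (T i).2
    by_cases hex : ∃ j, j < r ∧ (T (j + 1)).1 = p
    · obtain ⟨j, hj, hjp⟩ := hex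
      rw [ih _ _ p j hj hjp
        (fun l hl hlp => (huniq (l + 1) (by omega) hlp).trans (huniq (j + 1) (by omega) hjp).symm)]
      exact huniq (j + 1) (by omega) hjp
    · push_neg at hex
      rw [applyMuts_untouched r _ _ p (fun l hl => hex l hl)]
      rcases Nat.eq_zero_or_pos i with h0 | h0
      · subst h0
        rw [← hip, Function.update_self]
      · obtain ⟨j, rfl⟩ : ∃ j, i = j + 1 := ⟨i - 1, by omega⟩
        exact absurd hip (hex j (by omega))

lemma Fdel_nonneg (x : ℝ × ℝ) : 0 ≤ Fdel x := by
  unfold Fdel ddelta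
  have := abs_nonneg x.1
  split <;> linarith

lemma Fdel_le {N : ℕ} (hN : 1 ≤ N) (a b : Mut N) : Fdel (mutR a - mutR b) ≤ N := by
  unfold Fdel mutR ddelta
  have ha : (a.1.1 : ℝ) + 1 ≤ N := by exact_mod_cast a.1.2
  have hb : (b.1.1 : ℝ) + 1 ≤ N := by exact_mod_cast b.1.2
  have ha0 : (0 : ℝ) ≤ a.1.1 := Nat.cast_nonneg _
  have hb0 : (0 : ℝ) ≤ b.1.1 := Nat.cast_nonneg _
  have habs : |((a.1.1 : ℝ) + 1) - ((b.1.1 : ℝ) + 1)| ≤ (N : ℝ) - 1 :=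
    abs_le.mpr ⟨by linarith, by linarith⟩
  simp only [Prod.fst_sub, Prod.snd_sub]
  split <;> [linarith; linarith]

lemma dS_le {N : ℕ} (hN : 1 ≤ N) (m : ℕ) (S S' : MutSeq N) (hagree : ∀ k < m, S k = S' k) :
    dS S S' ≤ (1 / 10 : ℝ) ^ m := by
  have hN0 : (0 : ℝ) < N := by exact_mod_cast hN
  set f : ℕ → ℝ := fun k => Fdel (mutR (S k) - mutR (S' k)) / 10 ^ (k + 1) with hf
  set c : ℕ → ℝ := fun k => if k < m then 0 else (N : ℝ) * (1 / 10) ^ (k + 1) with hc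
  have hf0 : ∀ k, 0 ≤ f k := fun k =>
    div_nonneg (Fdel_nonneg _) (by positivity)
  have hfc : ∀ k, f k ≤ c k := by
    intro k
    by_cases hk : k < m
    · have : S k = S' k := hagree k hk
      simp only [hf, hc, this, if_pos hk, sub_self]
      rw [show Fdel 0 = 0 by unfold Fdel ddelta; simp]
      simp
    · calc f k ≤ (N : ℝ) / 10 ^ (k + 1) := by
            have h10 : (0:ℝ) < 10 ^ (k + 1) := by positivity
            exact div_le_div_of_nonneg_right (Fdel_le hN _ _) h10.le
          _ = (N : ℝ) * (1 / 10) ^ (k + 1) := by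
            rw [one_div, inv_pow, ← div_eq_mul_inv]
          _ = c k := by rw [hc]; simp [hk]
  have hg : Summable (fun k : ℕ => (N : ℝ) * (1 / 10) ^ (k + 1)) := by
    simp only [pow_succ]
    exact ((summable_geometric_of_lt_one (by norm_num) (by norm_num)).mul_right _).mul_left _
  have hc0 : ∀ k, 0 ≤ c k := by
    intro k; simp only [hc]; split <;> positivity
  have hcg : ∀ k, c k ≤ (N : ℝ) * (1 / 10) ^ (k + 1) := by
    intro k; simp only [hc]; split
    · positivity
    · exact le_rfl
  have hcs : Summable c := Summable.of_nonneg_of_le hc0 hcg hg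
  have hfs : Summable f := Summable.of_nonneg_of_le hf0 hfc hcs
  have htsum : ∑' k, f k ≤ ∑' k, c k := Summable.tsum_le_tsum hfc hfs hcs
  have hcval : ∑' k, c k = (N : ℝ) * (1 / 10) ^ (m + 1) * (10 / 9) := by
    rw [← Summable.sum_add_tsum_nat_add m hcs]
    have h1 : ∑ i ∈ Finset.range m, c i = 0 :=
      Finset.sum_eq_zero (fun i hi => by
        simp only [hc, if_pos (Finset.mem_range.mp hi)])
    have h2 : ∀ i : ℕ, c (i + m) = ((N : ℝ) * (1 / 10) ^ (m + 1)) * (1 / 10) ^ i := by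
      intro i
      simp only [hc, if_neg (by omega : ¬ i + m < m)]
      rw [show i + m + 1 = (m + 1) + i by omega, pow_add]
      ring
    rw [h1, zero_add]
    calc ∑' i : ℕ, c (i + m) = ∑' i : ℕ, ((N : ℝ) * (1 / 10) ^ (m + 1)) * (1 / 10) ^ i := by
          exact tsum_congr h2
      _ = ((N : ℝ) * (1 / 10) ^ (m + 1)) * (1 - 1 / 10)⁻¹ := by
          rw [tsum_mul_left, tsum_geometric_of_lt_one (by norm_num) (by norm_num)]
      _ = (N : ℝ) * (1 / 10) ^ (m + 1) * (10 / 9) := by norm_num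
  have : dS S S' ≤ (9 / N) * ((N : ℝ) * (1 / 10) ^ (m + 1) * (10 / 9)) := by
    unfold dS
    rw [← hcval]
    exact mul_le_mul_of_nonneg_left htsum (by positivity)
  calc dS S S' ≤ (9 / N) * ((N : ℝ) * (1 / 10) ^ (m + 1) * (10 / 9)) := this
    _ = (1 / 10 : ℝ) ^ m := by
        rw [pow_succ]
        field_simp

/-- The mutation operator `M` is strongly transitive on `(X_N, d)`: for all `X, Y ∈ X_N`
and every neighborhood of `X` (i.e. every open ball `B(X, ε)`, `ε > 0`), there exist
`n ∈ ℕ` and a point `X'` of this neighborhood such that `M^n(X') = Y`. -/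
theorem Mop_strongly_transitive (N : ℕ) (hN : 1 ≤ N) :
    ∀ X Y : Phase N, ∀ ε > (0 : ℝ),
      ∃ n : ℕ, ∃ X' : Phase N, dX X X' < ε ∧ (Mop (N := N))^[n] X' = Y := by
  intro X Y ε hε
  obtain ⟨m, hm⟩ := exists_pow_lt_of_lt_one hε (by norm_num : (1 : ℝ) / 10 < 1)
  set S' : MutSeq N := fun k =>
    if h1 : k < m then X.2 k
    else if h2 : k < m + N then (⟨k - m, by omega⟩, Y.1 ⟨k - m, by omega⟩)
    else Y.2 (k - (m + N)) with hS'
  refine ⟨m + N, (X.1, S'), ?_, ?_⟩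
  · have hdG : dG X.1 X.1 = 0 := by unfold dG; simp
    have hdS : dS X.2 S' ≤ (1 / 10 : ℝ) ^ m :=
      dS_le hN m X.2 S' (fun k hk => by simp only [hS', dif_pos hk])
    unfold dX
    simp only [hdG, zero_add]
    exact lt_of_le_of_lt hdS hm
  · rw [Mop_iterate]
    refine Prod.ext ?_ ?_
    · show applyMuts (m + N) X.1 S' = Y.1
      rw [applyMuts_add]
      funext p
      have hT : ∀ j : ℕ, (hj : j < N) → S' (j + m) = (⟨j, hj⟩, Y.1 ⟨j, hj⟩) := by
        intro j hj
        simp only [hS', dif_neg (by omega : ¬ j + m < m), dif_pos (by omega : j + m < m + N)]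
        refine Prod.ext (Fin.ext ?_) (congrArg Y.1 (Fin.ext ?_)) <;> (show j + m - m = j; omega)
      have hips : (S' (p.1 + m)).1 = p := by rw [hT p.1 p.2]
      rw [applyMuts_hit N _ _ p p.1 p.2 hips ?_]
      · rw [hT p.1 p.2]
      · intro j hj hjp
        have hTj := hT j hj
        have hjv : j = p.1 := by
          rw [hTj] at hjp
          exact congrArg Fin.val hjp
        rw [hjv]
    · show (fun k => S' (k + (m + N))) = Y.2
      funext k
      have h1 : ¬ k + (m + N) < m := by omega
      have h2 : ¬ k + (m + N) < m + N := by omega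
      have h3 : k + (m + N) - (m + N) = k := by omega
      simp only [hS', dif_neg h1, dif_neg h2, h3]
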